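/- arXiv:2407.10092 — 2 statements merged into one kernel-verified Lean document; each statement's English description precedes it below -/
import Mathlib

section
/- Let n > 2 be a prime, and let C'₁ = C(π/2) and C'₂ = V C(2π/n) Vᵀ in SO(3), where V is the rotation sending e₁ to −e₂ given by V = [[0,1,0],[−1,0,0],[0,0,1]]. Then every eigenvalue ζ of C'₁ C'₂ other than 1 has the form ζ = exp(i ψ π) for some irrational real ψ. -/
open Matrix

/-- rotation by angle θ about the first coordinate axis -/
noncomputable def Cmat (θ : ℝ) : Matrix (Fin 3) (Fin 3) ℝ :=
  !![1, 0, 0; 0, Real.cos θ, -Real.sin θ; 0, Real.sin θ, Real.cos θ]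

def Vmat : Matrix (Fin 3) (Fin 3) ℝ := !![0, 1, 0; -1, 0, 0; 0, 0, 1]

section Aux

open Polynomial Finset
lemma not_integral_cos (n : ℕ) (hn3 : 3 ≤ n) (hodd : Odd n) :
    ¬ IsIntegral ℤ (Complex.cos ((2 * Real.pi / n : ℝ) : ℂ)) := by
  intro hc
  have hpos : 0 < n := by omega
  set θ : ℂ := ((2 * Real.pi / n : ℝ) : ℂ) with hθ
  set η : ℂ := Complex.exp (θ * Complex.I) with hη
  have hprim : IsPrimitiveRoot η n := by
    have := Complex.isPrimitiveRoot_exp n (by omega)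
    convert this using 2
    rw [hθ]
    push_cast
    ring
  -- key1
  have key1 : ∀ k : ℕ, (1 + η ^ k) ^ 2 = 2 * η ^ k * (Complex.cos (k * θ) + 1) := by
    intro k
    have h1 : η ^ k = Complex.exp ((k * θ) * Complex.I) := by
      rw [hη, ← Complex.exp_nat_mul]; ring_nf
    have h2 : Complex.cos (k * θ) =
        (Complex.exp ((k*θ) * Complex.I) + Complex.exp (-((k*θ) * Complex.I))) / 2 := by
      rw [Complex.cos]; ring_nf
    have h3 : Complex.exp ((k*θ) * Complex.I) * Complex.exp (-((k*θ) * Complex.I)) = 1 := by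
      rw [← Complex.exp_add]; simp
    rw [h1, h2]
    linear_combination (-1 : ℂ) * h3
  -- key2
  have key2 : ∏ k ∈ Finset.Ico 1 n, (1 + η ^ k) = 1 := by
    have himg : nthRootsFinset n (1 : ℂ) = (Finset.range n).image (η ^ ·) := by
      symm
      apply Finset.eq_of_subset_of_card_le
      · intro x hx
        simp only [Finset.mem_image, Finset.mem_range] at hx
        obtain ⟨k, _, rfl⟩ := hx
        rw [Polynomial.mem_nthRootsFinset hpos]
        rw [← pow_mul, mul_comm, pow_mul, hprim.pow_eq_one, one_pow]
      · rw [hprim.card_nthRootsFinset, Finset.card_image_of_injOn (fun i hi j hj hij =>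
          hprim.pow_inj (Finset.mem_range.mp hi) (Finset.mem_range.mp hj) hij), Finset.card_range]
    have heval := congrArg (Polynomial.eval (-1 : ℂ)) (Polynomial.X_pow_sub_one_eq_prod hpos hprim)
    simp only [Polynomial.eval_sub, Polynomial.eval_pow, Polynomial.eval_X, Polynomial.eval_one,
      Polynomial.eval_prod, Polynomial.eval_sub, Polynomial.eval_C] at heval
    rw [himg, Finset.prod_image (fun i hi j hj hij =>
      hprim.pow_inj (Finset.mem_range.mp hi) (Finset.mem_range.mp hj) hij)] at heval
    have hsplit : ∏ k ∈ Finset.range n, ((-1 : ℂ) - η ^ k) =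
        ((-1) - 1) * ∏ k ∈ Finset.Ico 1 n, ((-1 : ℂ) - η ^ k) := by
      rw [Finset.range_eq_Ico, Finset.prod_eq_prod_Ico_succ_bot hpos]
      norm_num
    rw [hsplit] at heval
    have hodd' : (-1 : ℂ) ^ n = -1 := Odd.neg_one_pow hodd
    have h2 : ∏ k ∈ Finset.Ico 1 n, ((-1 : ℂ) - η ^ k) = 1 := by
      have h4 : (-2 : ℂ) = (-1 - 1) * ∏ k ∈ Finset.Ico 1 n, ((-1 : ℂ) - η ^ k) := by
        rw [← heval, hodd']; ring
      linear_combination (1/2 : ℂ) * h4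
    have h3 : ∀ k ∈ Finset.Ico 1 n, (1 + η ^ k) = (-1) * ((-1 : ℂ) - η ^ k) := by
      intro k _; ring
    rw [Finset.prod_congr rfl h3, Finset.prod_mul_distrib, Finset.prod_const, h2, mul_one,
      Nat.card_Ico]
    obtain ⟨m, hm⟩ := hodd
    have hev : n - 1 = 2 * m := by omega
    rw [hev, pow_mul]
    norm_num
  -- key3
  obtain ⟨m, hm⟩ := hodd
  have key3 : ∏ k ∈ Finset.Ico 1 n, η ^ k = 1 := by
    rw [Finset.prod_pow_eq_pow_sum]
    have h1 : (∑ i ∈ Finset.range n, i) * 2 = n * (n - 1) := Finset.sum_range_id_mul_two n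
    have h0 : ∑ k ∈ Finset.Ico 1 n, k = ∑ k ∈ Finset.range n, k := by
      rw [Finset.range_eq_Ico, Finset.sum_eq_sum_Ico_succ_bot hpos]
      simp
    have hev : n - 1 = 2 * m := by omega
    rw [hev] at h1
    have h5 : (∑ i ∈ Finset.range n, i) * 2 = (n * m) * 2 := by rw [h1]; ring
    have h6 : ∑ i ∈ Finset.range n, i = n * m := Nat.eq_of_mul_eq_mul_right (by norm_num) h5
    rw [h0, h6, pow_mul, hprim.pow_eq_one, one_pow]
  -- combine
  have h1 : ∏ k ∈ Finset.Ico 1 n, ((1 + η ^ k) ^ 2) = 1 := by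
    rw [Finset.prod_pow, key2, one_pow]
  have h2 : ∏ k ∈ Finset.Ico 1 n, (2 * η ^ k * (Complex.cos (k * θ) + 1)) = 1 :=
    (Finset.prod_congr rfl fun k _ => (key1 k).symm).trans h1
  rw [Finset.prod_mul_distrib, Finset.prod_mul_distrib, Finset.prod_const, key3, mul_one,
    Nat.card_Ico] at h2
  set P := ∏ k ∈ Finset.Ico 1 n, (Complex.cos (↑k * θ) + 1) with hP
  -- P is integral
  have hPmem : P ∈ integralClosure ℤ ℂ := by
    apply Subalgebra.prod_mem
    intro k _
    apply Subalgebra.add_mem _ _ (Subalgebra.one_mem _)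
    have hT : Complex.cos (↑k * θ) =
        Polynomial.aeval (Complex.cos θ) (Polynomial.Chebyshev.T ℤ (k : ℤ)) := by
      rw [Polynomial.aeval_def, Polynomial.eval₂_eq_eval_map, Polynomial.Chebyshev.map_T,
        Polynomial.Chebyshev.T_complex_cos]
      norm_num
    rw [hT, ← Polynomial.aeval_subalgebra_coe _ (integralClosure ℤ ℂ) ⟨Complex.cos θ, hc⟩]
    exact SetLike.coe_mem _
  have hPint : IsIntegral ℤ P := hPmem
  -- contradiction
  have h2ne : ((2 : ℂ)) ^ (n - 1) ≠ 0 := pow_ne_zero _ (by norm_num)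
  have hPval : P = algebraMap ℚ ℂ ((2 ^ (n - 1) : ℚ)⁻¹) := by
    have : ((2 : ℂ)) ^ (n - 1) * P = 1 := h2
    rw [eq_comm, map_inv₀, map_pow, map_ofNat, inv_eq_of_mul_eq_one_right this]
  rw [hPval, isIntegral_algebraMap_iff (algebraMap ℚ ℂ).injective] at hPint
  obtain ⟨y, hy⟩ := IsIntegrallyClosed.isIntegral_iff.mp hPint
  have hq : (y : ℚ) * 2 ^ (n - 1) = 1 := by
    rw [show ((y : ℚ)) = (2 ^ (n - 1) : ℚ)⁻¹ from hy]
    field_simp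
  have hz : y * 2 ^ (n - 1) = 1 := by exact_mod_cast hq
  have hdvd : (2 : ℤ) ^ (n - 1) ∣ 1 := ⟨y, by linarith [hz]⟩
  have hle := Int.le_of_dvd one_pos hdvd
  have h4 : (2 : ℤ) ^ 2 ≤ 2 ^ (n - 1) := pow_le_pow_right₀ (by norm_num) (by omega)
  omega

lemma root_of_unity_contradiction (n : ℕ) (hn3 : 3 ≤ n) (hodd : Odd n) (ζ : ℂ) (m : ℕ)
    (hm : 0 < m) (hζm : ζ ^ m = 1) (hζ0 : ζ ≠ 0)
    (hsum : ζ + ζ⁻¹ = ((Real.cos (2 * Real.pi / n) : ℝ) : ℂ) - 1) : False := by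
  have hint : IsIntegral ℤ ζ := by
    refine ⟨Polynomial.X ^ m - Polynomial.C 1, Polynomial.monic_X_pow_sub_C 1 hm.ne', ?_⟩
    simp [Polynomial.eval₂_sub, Polynomial.eval₂_pow, hζm]
  have hinv : ζ⁻¹ = ζ ^ (m - 1) := by
    obtain ⟨k, rfl⟩ : ∃ k, m = k + 1 := ⟨m - 1, by omega⟩
    apply inv_eq_of_mul_eq_one_right
    simpa [← pow_succ'] using hζm
  have hci : IsIntegral ℤ (((Real.cos (2 * Real.pi / n) : ℝ) : ℂ)) := by
    have h1 : (((Real.cos (2 * Real.pi / n) : ℝ) : ℂ)) = ζ + ζ ^ (m - 1) + 1 := by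
      rw [← hinv, hsum]; ring
    rw [h1]
    exact (hint.add (hint.pow _)).add isIntegral_one
  apply not_integral_cos n hn3 hodd
  rwa [← Complex.ofReal_cos]


end Aux

/-- for a prime n > 2, every eigenvalue ζ ≠ 1 of
C(π/2) · V C(2π/n) Vᵀ has the form exp(iψπ) with ψ irrational. -/
theorem eigenvalue_irrational_angle (n : ℕ) (hn : n.Prime) (h2 : 2 < n) :
    ∀ ζ : ℂ, ζ ≠ 1 →
      (∃ v : Fin 3 → ℂ, v ≠ 0 ∧
        ((Cmat (Real.pi / 2) * (Vmat * Cmat (2 * Real.pi / n) * Vmatᵀ)).map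
          Complex.ofReal).mulVec v = ζ • v) →
      ∃ ψ : ℝ, Irrational ψ ∧ ζ = Complex.exp (((ψ * Real.pi : ℝ) : ℂ) * Complex.I) := by
  intro ζ hζ1 ⟨v, hv0, hmv⟩
  set c : ℝ := Real.cos (2 * Real.pi / n) with hcdef
  set s : ℝ := Real.sin (2 * Real.pi / n) with hsdef
  -- the explicit matrix
  have hmat : Cmat (Real.pi / 2) * (Vmat * Cmat (2 * Real.pi / n) * Vmatᵀ) =
      !![c, 0, -s; -s, 0, -c; 0, 1, 0] := by
    ext i j
    fin_cases i <;> fin_cases j <;>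
      simp [Cmat, Vmat, Matrix.mul_apply, Fin.sum_univ_succ, Matrix.transpose_apply,
        Matrix.vecHead, Matrix.vecTail, hcdef, hsdef, Matrix.vecMul, dotProduct]
  rw [hmat] at hmv
  -- determinant vanishes
  have hdet : ((!![c, 0, -s; -s, 0, -c; 0, 1, 0]).map Complex.ofReal - ζ • 1).det = 0 := by
    rw [← Matrix.exists_mulVec_eq_zero_iff]
    refine ⟨v, hv0, ?_⟩
    rw [Matrix.sub_mulVec, hmv, Matrix.smul_mulVec, Matrix.one_mulVec, sub_self]
  have hsc : s ^ 2 + c ^ 2 = 1 := Real.sin_sq_add_cos_sq _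
  have hquad : ζ ^ 2 - ((c : ℂ) - 1) * ζ + 1 = 0 := by
    have h' : (s : ℂ) ^ 2 + (c : ℂ) ^ 2 = 1 := by exact_mod_cast congrArg Complex.ofReal hsc
    have hfac : ((!![c, 0, -s; -s, 0, -c; 0, 1, 0]).map Complex.ofReal - ζ • 1).det
        = -(ζ - 1) * (ζ ^ 2 - ((c : ℂ) - 1) * ζ + 1) := by
      simp [Matrix.det_fin_three, Matrix.one_apply]
      linear_combination h'
    rw [hfac] at hdet
    rcases mul_eq_zero.mp hdet with h | h
    · exact absurd (by linear_combination -h) hζ1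
    · exact h
  have hζ0 : ζ ≠ 0 := by
    intro h
    rw [h] at hquad
    simp at hquad
  -- bounds on c
  have hnpos : (0 : ℝ) < n := by exact_mod_cast (by omega : 0 < n)
  have hθpos : 0 < 2 * Real.pi / n := div_pos (by positivity) hnpos
  have hθlt : 2 * Real.pi / n < Real.pi := by
    rw [div_lt_iff₀ hnpos]
    have h3 : (3 : ℝ) ≤ n := by exact_mod_cast (by omega : 3 ≤ n)
    nlinarith [Real.pi_pos]
  have hc1 : c < 1 := by
    rw [hcdef, ← Real.cos_zero]
    apply Real.cos_lt_cos_of_nonneg_of_le_pi le_rfl hθlt.le hθpos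
  have hcn1 : -1 < c := by
    rw [hcdef, ← Real.cos_pi]
    apply Real.cos_lt_cos_of_nonneg_of_le_pi hθpos.le le_rfl hθlt
  -- conj ζ = ζ⁻¹ and |ζ| = 1
  have hconj : (starRingEnd ℂ) ζ * ζ = 1 := by
    have hq2 : ((starRingEnd ℂ) ζ) ^ 2 - ((c : ℂ) - 1) * ((starRingEnd ℂ) ζ) + 1 = 0 := by
      have := congrArg (starRingEnd ℂ) hquad
      simpa [map_pow, _root_.map_mul, map_sub, map_add, Complex.conj_ofReal] using this
    have hcases : ((starRingEnd ℂ) ζ - ζ) * ((starRingEnd ℂ) ζ - (((c : ℂ) - 1) - ζ)) = 0 := by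
      linear_combination hq2 - hquad
    rcases mul_eq_zero.mp hcases with h | h
    · -- ζ real: impossible
      exfalso
      have hreal : (starRingEnd ℂ) ζ = ζ := by linear_combination h
      obtain ⟨x, hx⟩ := Complex.conj_eq_iff_real.mp hreal
      rw [hx] at hquad
      have hxr : x ^ 2 - (c - 1) * x + 1 = 0 := by exact_mod_cast hquad
      nlinarith [sq_nonneg (x - (c - 1) / 2), sq_nonneg x]
    · have h' : (starRingEnd ℂ) ζ = ((c : ℂ) - 1) - ζ := by linear_combination h
      rw [h']
      linear_combination -hquad
  have habs : ‖ζ‖ = 1 := by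
    have h1 : ((Complex.normSq ζ : ℝ) : ℂ) = 1 := by
      rw [← Complex.mul_conj]
      linear_combination hconj
    have h2 : Complex.normSq ζ = 1 := by exact_mod_cast h1
    rw [Complex.norm_def, h2, Real.sqrt_one]
  -- ζ = exp(ψ π i)
  refine ⟨ζ.arg / Real.pi, ?_, ?_⟩
  · -- irrationality
    rw [Irrational]
    intro ⟨r, hr⟩
    -- ζ is a root of unity
    have hψπ : (ζ.arg / Real.pi) * Real.pi = ζ.arg :=
      div_mul_cancel₀ _ Real.pi_ne_zero
    have hζexp : ζ = Complex.exp ((ζ.arg : ℂ) * Complex.I) := by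
      conv_lhs => rw [← Complex.norm_mul_exp_arg_mul_I ζ]
      rw [habs]
      simp
    have hden : (0 : ℝ) < (r.den : ℝ) := by exact_mod_cast r.pos
    have hrnum : (r.den : ℝ) * ζ.arg = r.num * Real.pi := by
      rw [← hψπ, ← hr]
      push_cast
      rw [Rat.cast_def]
      field_simp
    have hpow : ζ ^ (2 * r.den) = 1 := by
      rw [hζexp, ← Complex.exp_nat_mul]
      have : (↑(2 * r.den) : ℂ) * ((ζ.arg : ℂ) * Complex.I) = (r.num : ℂ) * (2 * (Real.pi : ℂ) * Complex.I) := by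
        have : ((r.den : ℝ) * ζ.arg : ℂ) = ((r.num * Real.pi : ℝ) : ℂ) := by
          exact_mod_cast congrArg Complex.ofReal hrnum
        push_cast at this ⊢
        linear_combination 2 * Complex.I * this
      rw [this, Complex.exp_int_mul_two_pi_mul_I]
    have hsum : ζ + ζ⁻¹ = ((c : ℝ) : ℂ) - 1 := by
      field_simp
      linear_combination hquad
    exact root_of_unity_contradiction n (by omega) (hn.odd_of_ne_two (by omega)) ζ
      (2 * r.den) (by positivity) hpow hζ0 hsum
  · -- the exponential form
    rw [div_mul_cancel₀ _ Real.pi_ne_zero]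
    conv_lhs => rw [← Complex.norm_mul_exp_arg_mul_I ζ]
    rw [habs]
    simp
end

section
/- Let G ⊆ SO(3) × SO(3) be a subgroup that is dense in SO(3) × SO(3), and let G̃ ⊆ SO(4) be a subgroup whose image under the double covering π : SO(4) → SO(3) × SO(3) is G. Then G̃ is dense in SO(4). -/
/-- SO(n) as a subgroup of the orthogonal group O(n). -/
def SOsub (n : ℕ) : Subgroup ↥(Matrix.orthogonalGroup (Fin n) ℝ) where
  carrier := {A | (A : Matrix (Fin n) (Fin n) ℝ).det = 1}
  one_mem' := by simp
  mul_mem' := by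
    intro a b ha hb
    simp only [Set.mem_setOf_eq] at *
    have h : ((a * b : ↥(Matrix.orthogonalGroup (Fin n) ℝ)) : Matrix (Fin n) (Fin n) ℝ)
        = (a : Matrix (Fin n) (Fin n) ℝ) * (b : Matrix (Fin n) (Fin n) ℝ) := rfl
    rw [h, Matrix.det_mul, ha, hb, mul_one]
  inv_mem' := by
    intro a ha
    simp only [Set.mem_setOf_eq] at *
    show ((a⁻¹ : ↥(Matrix.orthogonalGroup (Fin n) ℝ)) : Matrix (Fin n) (Fin n) ℝ).det = 1
    have h : ((a⁻¹ : ↥(Matrix.orthogonalGroup (Fin n) ℝ)) : Matrix (Fin n) (Fin n) ℝ)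
        = star (a : Matrix (Fin n) (Fin n) ℝ) := rfl
    rw [h, Matrix.star_eq_conjTranspose, Matrix.det_conjTranspose]
    simpa using ha

open Matrix

instance unitaryGroupTopGroup (n : ℕ) : IsTopologicalGroup ↥(Matrix.unitaryGroup (Fin n) ℝ) where
  continuous_mul := by
    apply Continuous.subtype_mk
    exact ((continuous_subtype_val.comp continuous_fst).mul
      (continuous_subtype_val.comp continuous_snd))
  continuous_inv := by
    apply Continuous.subtype_mk
    show Continuous fun a : ↥(Matrix.unitaryGroup (Fin n) ℝ) => star (a : Matrix (Fin n) (Fin n) ℝ)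
    exact continuous_star.comp continuous_subtype_val

/-- The 2×2 rotation matrix. -/
noncomputable def rot2 (t : ℝ) : Matrix (Fin 2) (Fin 2) ℝ :=
  !![Real.cos t, -Real.sin t; Real.sin t, Real.cos t]

lemma rot2_mul_star (t : ℝ) : rot2 t * star (rot2 t) = 1 := by
  have h := Real.sin_sq_add_cos_sq t
  rw [Matrix.star_eq_conjTranspose]
  ext i j
  fin_cases i <;> fin_cases j <;>
    simp [rot2, Matrix.mul_apply, Fin.sum_univ_two, Matrix.conjTranspose_apply,
      Matrix.one_apply, Matrix.vecHead, Matrix.vecTail] <;> nlinarith [h]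

lemma rot2_det (t : ℝ) : (rot2 t).det = 1 := by
  rw [rot2, Matrix.det_fin_two_of]
  nlinarith [Real.sin_sq_add_cos_sq t]

/-- A path in 4×4 matrices from the identity to -1. -/
noncomputable def p4 (t : ℝ) : Matrix (Fin 4) (Fin 4) ℝ :=
  Matrix.reindex finSumFinEquiv finSumFinEquiv (Matrix.fromBlocks (rot2 t) 0 0 (rot2 t))

lemma p4_mem (t : ℝ) : p4 t ∈ Matrix.orthogonalGroup (Fin 4) ℝ := by
  have hr : rot2 t * (rot2 t)ᴴ = 1 := by
    rw [← Matrix.star_eq_conjTranspose]; exact rot2_mul_star t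
  rw [Matrix.mem_orthogonalGroup_iff, p4, ← Matrix.conjTranspose_eq_transpose_of_trivial, Matrix.reindex_apply,
    Matrix.conjTranspose_submatrix, Matrix.submatrix_mul_equiv,
    Matrix.fromBlocks_conjTranspose, Matrix.fromBlocks_multiply]
  simp only [Matrix.conjTranspose_zero, Matrix.mul_zero, Matrix.zero_mul, add_zero, zero_add, hr]
  rw [Matrix.fromBlocks_one, Matrix.submatrix_one_equiv]

lemma p4_det (t : ℝ) : (p4 t).det = 1 := by
  rw [p4, Matrix.reindex_apply, ← Matrix.det_reindex_self finSumFinEquiv.symm]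
  rw [Matrix.reindex_apply]
  simp only [Equiv.symm_symm, Matrix.submatrix_submatrix]
  rw [show (finSumFinEquiv : Fin 2 ⊕ Fin 2 ≃ Fin 4).symm ∘ finSumFinEquiv = id by
    ext x; simp, Matrix.submatrix_id_id, Matrix.det_fromBlocks_zero₂₁, rot2_det, mul_one]

lemma p4_zero : p4 0 = 1 := by
  have : rot2 0 = 1 := by
    ext i j; fin_cases i <;> fin_cases j <;> simp [rot2, Matrix.one_apply]
  rw [p4, this, Matrix.fromBlocks_one, Matrix.reindex_apply, Matrix.submatrix_one_equiv]

lemma p4_pi : p4 Real.pi = -1 := by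
  have : rot2 Real.pi = -1 := by
    ext i j; fin_cases i <;> fin_cases j <;>
      simp [rot2, Matrix.one_apply, Real.cos_pi, Real.sin_pi]
  have h2 : (Matrix.fromBlocks (rot2 Real.pi) 0 0 (rot2 Real.pi) :
      Matrix (Fin 2 ⊕ Fin 2) (Fin 2 ⊕ Fin 2) ℝ) = -(Matrix.fromBlocks 1 0 0 1) := by
    rw [Matrix.fromBlocks_neg, this]; norm_num
  rw [p4, Matrix.reindex_apply, h2, Matrix.fromBlocks_one]
  have h3 : ((-(1 : Matrix (Fin 2 ⊕ Fin 2) (Fin 2 ⊕ Fin 2) ℝ)).submatrix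
      finSumFinEquiv.symm finSumFinEquiv.symm) = -((1 : Matrix (Fin 2 ⊕ Fin 2) (Fin 2 ⊕ Fin 2) ℝ).submatrix finSumFinEquiv.symm finSumFinEquiv.symm) := rfl
  rw [h3, Matrix.submatrix_one_equiv]

lemma p4_continuous : Continuous p4 := by
  have hrot : Continuous rot2 := by
    apply continuous_matrix
    intro i j
    fin_cases i <;> fin_cases j <;> simp [rot2] <;> fun_prop
  exact ((hrot.matrix_fromBlocks continuous_const continuous_const hrot).matrix_reindex _ _)

/-- The path as a map into SO(4). -/
noncomputable def pathSO4 (t : ℝ) : ↥(SOsub 4) :=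
  ⟨⟨p4 t, p4_mem t⟩, p4_det t⟩

lemma pathSO4_continuous : Continuous pathSO4 :=
  (p4_continuous.subtype_mk _).subtype_mk _

noncomputable def zSO4 : ↥(SOsub 4) := pathSO4 Real.pi

lemma pathSO4_zero : pathSO4 0 = 1 := Subtype.ext (Subtype.ext p4_zero)

/-- if π : SO(4) → SO(3) × SO(3) is the standard double covering
(continuous, open, surjective homomorphism with kernel {±I₄}), G ⊆ SO(3) × SO(3) is a
dense subgroup and the subgroup G̃ ⊆ SO(4) satisfies π(G̃) = G, then G̃ is dense in SO(4). -/
theorem dense_lift_SO4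
    (π4 : ↥(SOsub 4) →* ↥(SOsub 3) × ↥(SOsub 3))
    (hcont : Continuous π4) (hopen : IsOpenMap π4) (hsurj : Function.Surjective π4)
    (hker : ∀ g : ↥(SOsub 4), π4 g = 1 ↔
      (((g : ↥(Matrix.orthogonalGroup (Fin 4) ℝ)) : Matrix (Fin 4) (Fin 4) ℝ)
          = (1 : Matrix (Fin 4) (Fin 4) ℝ) ∨
        ((g : ↥(Matrix.orthogonalGroup (Fin 4) ℝ)) : Matrix (Fin 4) (Fin 4) ℝ)
          = (-1 : Matrix (Fin 4) (Fin 4) ℝ)))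
    (G : Subgroup (↥(SOsub 3) × ↥(SOsub 3))) (hG : Dense (G : Set (↥(SOsub 3) × ↥(SOsub 3))))
    (Gt : Subgroup ↥(SOsub 4)) (him : Subgroup.map π4 Gt = G) :
    Dense (Gt : Set ↥(SOsub 4)) := by
  classical
  set z : ↥(SOsub 4) := zSO4 with hzdef
  -- the preimage of G is dense
  have hDense : Dense {x : ↥(SOsub 4) | π4 x ∈ G} := by
    rw [dense_iff_inter_open]
    intro U hU hne
    obtain ⟨g, hg1, hg2⟩ := hG.inter_open_nonempty (π4 '' U) (hopen U hU) (hne.image _)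
    obtain ⟨y, hyU, rfl⟩ := hg1
    exact ⟨y, hyU, hg2⟩
  -- the preimage of G is contained in Gt ∪ Gt·z
  have hsub : {x : ↥(SOsub 4) | π4 x ∈ G} ⊆
      (Gt : Set _) ∪ ((fun y => y * z) '' (Gt : Set _)) := by
    intro x hx
    rw [← him] at hx
    obtain ⟨y, hyGt, hyx⟩ := hx
    have h1 : π4 (y⁻¹ * x) = 1 := by
      rw [MonoidHom.map_mul, MonoidHom.map_inv, hyx]
      group
    rcases (hker _).mp h1 with h | h
    · left
      have : y⁻¹ * x = 1 := Subtype.ext (Subtype.ext h)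
      rwa [← inv_mul_eq_one.mp this]
    · right
      have hz' : y⁻¹ * x = z := Subtype.ext (Subtype.ext (h.trans p4_pi.symm))
      exact ⟨y, hyGt, (inv_mul_eq_iff_eq_mul.mp hz').symm⟩
  set K := Gt.topologicalClosure with hK
  have hGtK : (Gt : Set ↥(SOsub 4)) ⊆ (K : Set _) := Gt.le_topologicalClosure
  have hKcoe : (K : Set ↥(SOsub 4)) = closure (Gt : Set _) := Subgroup.topologicalClosure_coe
  -- z lies in the closure of Gt
  have hzK : z ∈ K := by
    by_contra hzK
    have hKclosed : IsClosed (K : Set ↥(SOsub 4)) := by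
      rw [hKcoe]; exact isClosed_closure
    have hC2closed : IsClosed ((fun y => y * z) '' (K : Set ↥(SOsub 4))) :=
      (Homeomorph.mulRight z).isClosedMap _ hKclosed
    have himg : (fun y => y * z) '' closure (Gt : Set ↥(SOsub 4))
        = closure ((fun y => y * z) '' (Gt : Set ↥(SOsub 4))) :=
      (Homeomorph.mulRight z).image_closure _
    have hcover : (Set.univ : Set ↥(SOsub 4)) ⊆
        (K : Set _) ∪ ((fun y => y * z) '' (K : Set _)) := by
      calc (Set.univ : Set ↥(SOsub 4)) = closure {x : ↥(SOsub 4) | π4 x ∈ G} :=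
            hDense.closure_eq.symm
        _ ⊆ closure ((Gt : Set _) ∪ ((fun y => y * z) '' (Gt : Set _))) := closure_mono hsub
        _ = closure (Gt : Set _) ∪ closure ((fun y => y * z) '' (Gt : Set _)) := closure_union
        _ = (K : Set _) ∪ ((fun y => y * z) '' (K : Set _)) := by rw [hKcoe, himg]
    have hdisj : (K : Set ↥(SOsub 4)) ∩ ((fun y => y * z) '' (K : Set _)) = ∅ := by
      ext x
      simp only [Set.mem_inter_iff, Set.mem_empty_iff_false, iff_false, not_and]
      intro hxK himg2
      obtain ⟨h, hhK, rfl⟩ := himg2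
      have : z ∈ K := by
        have := mul_mem (inv_mem hhK) hxK
        simpa using this
      exact hzK this
    have hclopen : IsClopen (K : Set ↥(SOsub 4)) := by
      have heq : (K : Set ↥(SOsub 4)) = ((fun y => y * z) '' (K : Set _))ᶜ := by
        apply Set.Subset.antisymm
        · intro x hx hx2
          exact (Set.eq_empty_iff_forall_notMem.mp hdisj x ⟨hx, hx2⟩).elim
        · intro x hx
          rcases hcover (Set.mem_univ x) with h | h
          · exact h
          · exact absurd h hx
      constructor
      · exact hKclosed
      · rw [heq]; exact hC2closed.isOpen_compl
    have hpre : IsPreconnected (pathSO4 '' Set.Icc 0 Real.pi) :=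
      isPreconnected_Icc.image _ pathSO4_continuous.continuousOn
    have h1mem : (1 : ↥(SOsub 4)) ∈ pathSO4 '' Set.Icc 0 Real.pi :=
      ⟨0, ⟨le_refl 0, Real.pi_pos.le⟩, pathSO4_zero⟩
    have hsubK : pathSO4 '' Set.Icc 0 Real.pi ⊆ (K : Set _) :=
      hpre.subset_isClopen hclopen ⟨1, h1mem, K.one_mem⟩
    exact hzK (hsubK ⟨Real.pi, ⟨Real.pi_pos.le, le_refl _⟩, rfl⟩)
  -- conclude
  have hfin : {x : ↥(SOsub 4) | π4 x ∈ G} ⊆ (K : Set ↥(SOsub 4)) := by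
    intro x hx
    rcases hsub hx with h | h
    · exact hGtK h
    · obtain ⟨y, hyGt, rfl⟩ := h
      exact mul_mem (hGtK hyGt) hzK
  have hdK : Dense (K : Set ↥(SOsub 4)) := hDense.mono hfin
  rw [hKcoe] at hdK
  exact dense_closure.mp hdK
end
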